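/- Let β₀ < α₀ be reals and let μ : ℝ² → ℝ be integrable on T(β₀,α₀). For v ∈ [β₀,α₀] define I(v) := ∬_{Ω(v)} μ(α,β) dα dβ with Ω(v) := {(α,β) : v ≤ α ≤ α₀, β₀ ≤ β ≤ v}. Suppose there exist β₀ < α₁⁻ < α₁ < α₁⁺ < α₀ with I(α₁) = 0, I(α₁⁻) ≠ 0 and I(α₁⁺) ≠ 0. Then f⁺(α₁) = f⁻(α₁) while f⁺(α₁⁻) ≠ f⁻(α₁⁻) and f⁺(α₁⁺) ≠ f⁻(α₁⁺); moreover I is continuous on [β₀,α₀], and the connected component of the zero set {v ∈ [β₀,α₀] : I(v) = 0} containing α₁ is contained in the open interval (α₁⁻, α₁⁺), hence contains neither β₀ nor α₀. Consequently the major hysteresis loop of the Preisach operator with weighting μ has a crossover point at input value α₁ whose maximal connected set of crossover points is disjoint from the loop endpoints, i.e. this Preisach operator is a multi-loop hysteresis operator. -/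

import Mathlib

/-!
STATEMENT 7: If I(α₁) = 0 while I(α₁⁻) ≠ 0 and I(α₁⁺) ≠ 0 for
β₀ < α₁⁻ < α₁ < α₁⁺ < α₀, where I(v) = ∬_{Ω(v)} μ, then the ascending and
descending branches meet at α₁ but not at α₁⁻ nor α₁⁺, I is continuous on
[β₀,α₀], and the connected component of the zero set of I containing α₁ lies
in (α₁⁻, α₁⁺), hence contains neither endpoint: the Preisach operator with
weighting μ is a multi-loop hysteresis operator.
-/

open MeasureTheory

/-- The triangular subregion `T(b₀,a₀) = {(α,β) : b₀ ≤ β ≤ α ≤ a₀}` of the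
Preisach plane (points are `p = (α, β)`). -/
def preisachTriangle (b₀ a₀ : ℝ) : Set (ℝ × ℝ) :=
  {p : ℝ × ℝ | b₀ ≤ p.2 ∧ p.2 ≤ p.1 ∧ p.1 ≤ a₀}

/-- Ascending branch of the Preisach operator with weighting `μ` over the
input range `[b₀, a₀]`. -/
noncomputable def ascendingBranch (μ : ℝ × ℝ → ℝ) (b₀ a₀ v : ℝ) : ℝ :=
  ∫ p in preisachTriangle b₀ a₀, μ p * (if p.1 < v then (1 : ℝ) else -1)

/-- Descending branch of the Preisach operator with weighting `μ` over the
input range `[b₀, a₀]`. -/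
noncomputable def descendingBranch (μ : ℝ × ℝ → ℝ) (b₀ a₀ v : ℝ) : ℝ :=
  ∫ p in preisachTriangle b₀ a₀, μ p * (if p.2 > v then (-1 : ℝ) else 1)

/-- The crossover integral `I(v) = ∬_{Ω(v)} μ` over the rectangle
`Ω(v) = {(α,β) : v ≤ α ≤ α₀, β₀ ≤ β ≤ v}`. -/
noncomputable def crossoverIntegral (μ : ℝ × ℝ → ℝ) (β₀ α₀ v : ℝ) : ℝ :=
  ∫ p in {p : ℝ × ℝ | v ≤ p.1 ∧ p.1 ≤ α₀ ∧ β₀ ≤ p.2 ∧ p.2 ≤ v}, μ p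

/-- The rectangle Ω(v). -/
def omegaRect (β₀ α₀ v : ℝ) : Set (ℝ × ℝ) :=
  {p : ℝ × ℝ | v ≤ p.1 ∧ p.1 ≤ α₀ ∧ β₀ ≤ p.2 ∧ p.2 ≤ v}

lemma measurableSet_omegaRect (β₀ α₀ v : ℝ) : MeasurableSet (omegaRect β₀ α₀ v) := by
  have : omegaRect β₀ α₀ v =
      ({p : ℝ × ℝ | v ≤ p.1} ∩ {p | p.1 ≤ α₀} ∩ {p | β₀ ≤ p.2} ∩ {p | p.2 ≤ v}) := by
    ext p; simp [omegaRect, Set.mem_setOf_eq, and_assoc]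
  rw [this]
  exact (((measurableSet_le measurable_const measurable_fst).inter
    (measurableSet_le measurable_fst measurable_const)).inter
    (measurableSet_le measurable_const measurable_snd)).inter
    (measurableSet_le measurable_snd measurable_const)

lemma measurableSet_triangle (b₀ a₀ : ℝ) : MeasurableSet (preisachTriangle b₀ a₀) := by
  have : preisachTriangle b₀ a₀ =
      ({p : ℝ × ℝ | b₀ ≤ p.2} ∩ {p | p.2 ≤ p.1} ∩ {p | p.1 ≤ a₀}) := by
    ext p; simp [preisachTriangle, Set.mem_setOf_eq, and_assoc]
  rw [this]
  exact ((measurableSet_le measurable_const measurable_snd).inter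
    (measurableSet_le measurable_snd measurable_fst)).inter
    (measurableSet_le measurable_fst measurable_const)

lemma omega_eq_inter (β₀ α₀ v : ℝ) :
    {p : ℝ × ℝ | v ≤ p.1 ∧ p.2 ≤ v} ∩ preisachTriangle β₀ α₀ = omegaRect β₀ α₀ v := by
  ext p
  simp only [Set.mem_inter_iff, Set.mem_setOf_eq, preisachTriangle, omegaRect]
  constructor
  · rintro ⟨⟨h1, h2⟩, h3, h4, h5⟩; exact ⟨h1, h5, h3, h2⟩
  · rintro ⟨h1, h2, h3, h4⟩; exact ⟨⟨h1, h4⟩, h3, le_trans h4 h1, h2⟩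

/-- Key crossover identity: `f⁻(v) − f⁺(v) = 2 I(v)`. -/
lemma branch_diff (μ : ℝ × ℝ → ℝ) (β₀ α₀ : ℝ)
    (hμ : IntegrableOn μ (preisachTriangle β₀ α₀) volume) (v : ℝ) :
    descendingBranch μ β₀ α₀ v - ascendingBranch μ β₀ α₀ v
      = 2 * crossoverIntegral μ β₀ α₀ v := by
  have hT : MeasurableSet (preisachTriangle β₀ α₀) := measurableSet_triangle β₀ α₀
  set ν := volume.restrict (preisachTriangle β₀ α₀)
  have hint : ∀ s : ℝ × ℝ → ℝ, Measurable s → (∀ p, ‖s p‖ ≤ 1) →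
      Integrable (fun p => μ p * s p) ν := by
    intro s hs hb
    have := hμ.bdd_mul (f := s) hs.aestronglyMeasurable (Filter.Eventually.of_forall hb)
    exact this.congr (Filter.Eventually.of_forall fun p => mul_comm _ _)
  have hmeas1 : Measurable (fun p : ℝ × ℝ => if p.2 > v then (-1 : ℝ) else 1) := by
    exact Measurable.ite (measurableSet_lt measurable_const measurable_snd)
      measurable_const measurable_const
  have hmeas2 : Measurable (fun p : ℝ × ℝ => if p.1 < v then (1 : ℝ) else -1) := by
    exact Measurable.ite (measurableSet_lt measurable_fst measurable_const)
      measurable_const measurable_const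
  have hi1 : Integrable (fun p => μ p * (if p.2 > v then (-1 : ℝ) else 1)) ν :=
    hint _ hmeas1 (by intro p; split_ifs <;> simp)
  have hi2 : Integrable (fun p => μ p * (if p.1 < v then (1 : ℝ) else -1)) ν :=
    hint _ hmeas2 (by intro p; split_ifs <;> simp)
  have hsub : descendingBranch μ β₀ α₀ v - ascendingBranch μ β₀ α₀ v
      = ∫ p in preisachTriangle β₀ α₀,
          (μ p * (if p.2 > v then (-1 : ℝ) else 1)
            - μ p * (if p.1 < v then (1 : ℝ) else -1)) := by
    rw [descendingBranch, ascendingBranch, ← integral_sub hi1 hi2]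
  rw [hsub]
  have hcong : ∫ p in preisachTriangle β₀ α₀,
      (μ p * (if p.2 > v then (-1 : ℝ) else 1)
        - μ p * (if p.1 < v then (1 : ℝ) else -1))
      = ∫ p in preisachTriangle β₀ α₀,
          Set.indicator {q : ℝ × ℝ | v ≤ q.1 ∧ q.2 ≤ v} (fun q => 2 * μ q) p := by
    apply setIntegral_congr_fun hT
    intro p hp
    have hp21 : p.2 ≤ p.1 := hp.2.1
    simp only [Set.indicator_apply, Set.mem_setOf_eq]
    split_ifs with h1 h2 h3 h3 h2 h3 h3
    · linarith
    · linarith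
    · linarith [h3.2]
    · ring
    · linarith [h3.1]
    · ring
    · ring
    · push_neg at h1 h2 h3
      linarith [h3 h2]
  rw [hcong, setIntegral_indicator (by
    exact (measurableSet_le measurable_const measurable_fst).inter
      (measurableSet_le measurable_snd measurable_const)),
    Set.inter_comm, omega_eq_inter, crossoverIntegral, integral_const_mul]
  rfl

lemma omega_subset_triangle {β₀ α₀ v : ℝ} (h1 : β₀ ≤ v) (h2 : v ≤ α₀) :
    omegaRect β₀ α₀ v ⊆ preisachTriangle β₀ α₀ := by
  rintro p ⟨ha, hb, hc, hd⟩
  exact ⟨hc, le_trans hd ha, hb⟩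

/-- Continuity of the crossover integral on `[β₀, α₀]`. -/
lemma crossover_continuousOn (μ : ℝ × ℝ → ℝ) (β₀ α₀ : ℝ)
    (hμ : IntegrableOn μ (preisachTriangle β₀ α₀) volume) :
    ContinuousOn (crossoverIntegral μ β₀ α₀) (Set.Icc β₀ α₀) := by
  have hT : MeasurableSet (preisachTriangle β₀ α₀) := measurableSet_triangle β₀ α₀
  intro v₀ hv₀
  have hF : ∀ v : ℝ, crossoverIntegral μ β₀ α₀ v
      = ∫ p, Set.indicator (omegaRect β₀ α₀ v) μ p := by
    intro v
    rw [crossoverIntegral, integral_indicator (measurableSet_omegaRect β₀ α₀ v)]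
    rfl
  rw [ContinuousWithinAt, hF v₀]
  apply Filter.Tendsto.congr (fun v => (hF v).symm)
  apply tendsto_integral_filter_of_dominated_convergence
    (bound := Set.indicator (preisachTriangle β₀ α₀) (fun p => ‖μ p‖))
  · filter_upwards [self_mem_nhdsWithin] with v hv
    rw [aestronglyMeasurable_indicator_iff (measurableSet_omegaRect β₀ α₀ v)]
    exact hμ.aestronglyMeasurable.mono_measure
      (Measure.restrict_mono (omega_subset_triangle hv.1 hv.2) le_rfl)
  · filter_upwards [self_mem_nhdsWithin] with v hv
    refine Filter.Eventually.of_forall fun p => ?_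
    by_cases hp : p ∈ omegaRect β₀ α₀ v
    · rw [Set.indicator_of_mem hp,
        Set.indicator_of_mem (omega_subset_triangle hv.1 hv.2 hp)]
    · rw [Set.indicator_of_notMem hp]
      simp only [norm_zero]
      exact Set.indicator_apply_nonneg fun _ => norm_nonneg _
  · exact IntegrableOn.integrable_indicator hμ.norm hT
  · have hnull : volume ({p : ℝ × ℝ | p.1 = v₀} ∪ {p : ℝ × ℝ | p.2 = v₀}) = 0 := by
      apply measure_union_null
      · have : {p : ℝ × ℝ | p.1 = v₀} = ({v₀} : Set ℝ) ×ˢ (Set.univ : Set ℝ) := by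
          ext p; simp [Set.mem_prod, Prod.ext_iff, eq_comm]
        rw [this, Measure.volume_eq_prod, Measure.prod_prod, Real.volume_singleton, zero_mul]
      · have : {p : ℝ × ℝ | p.2 = v₀} = (Set.univ : Set ℝ) ×ˢ ({v₀} : Set ℝ) := by
          ext p; simp [Set.mem_prod, Prod.ext_iff, eq_comm]
        rw [this, Measure.volume_eq_prod, Measure.prod_prod, Real.volume_singleton, mul_zero]
    rw [← compl_mem_ae_iff] at hnull
    filter_upwards [hnull] with p hp
    simp only [Set.compl_union, Set.mem_inter_iff, Set.mem_compl_iff, Set.mem_setOf_eq] at hp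
    obtain ⟨hp1, hp2⟩ := hp
    have hev : ∀ᶠ v in nhdsWithin v₀ (Set.Icc β₀ α₀),
        Set.indicator (omegaRect β₀ α₀ v) μ p = Set.indicator (omegaRect β₀ α₀ v₀) μ p := by
      apply nhdsWithin_le_nhds
      have h1 : ∀ᶠ v in nhds v₀, (v ≤ p.1 ↔ v₀ ≤ p.1) := by
        rcases lt_or_gt_of_ne (Ne.symm hp1) with h | h
        · filter_upwards [eventually_lt_nhds h] with v hv
          exact iff_of_true hv.le h.le
        · filter_upwards [eventually_gt_nhds h] with v hv
          exact iff_of_false (not_le.mpr hv) (not_le.mpr h)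
      have h2 : ∀ᶠ v in nhds v₀, (p.2 ≤ v ↔ p.2 ≤ v₀) := by
        rcases lt_or_gt_of_ne hp2 with h | h
        · filter_upwards [eventually_gt_nhds h] with v hv
          exact iff_of_true hv.le h.le
        · filter_upwards [eventually_lt_nhds h] with v hv
          exact iff_of_false (not_le.mpr hv) (not_le.mpr h)
      filter_upwards [h1, h2] with v hv1 hv2
      have hmemiff : p ∈ omegaRect β₀ α₀ v ↔ p ∈ omegaRect β₀ α₀ v₀ := by
        simp only [omegaRect, Set.mem_setOf_eq, hv1, hv2]
      by_cases hm : p ∈ omegaRect β₀ α₀ v₀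
      · rw [Set.indicator_of_mem (hmemiff.mpr hm), Set.indicator_of_mem hm]
      · rw [Set.indicator_of_notMem (fun h => hm (hmemiff.mp h)),
          Set.indicator_of_notMem hm]
    exact Filter.Tendsto.congr' (hev.mono fun v h => h.symm) tendsto_const_nhds

theorem preisach_multiloop
    (β₀ α₀ : ℝ) (hba : β₀ < α₀) (μ : ℝ × ℝ → ℝ)
    (hμ : IntegrableOn μ (preisachTriangle β₀ α₀) volume)
    (αm α₁ αp : ℝ)
    (h1 : β₀ < αm) (h2 : αm < α₁) (h3 : α₁ < αp) (h4 : αp < α₀)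
    (hI0 : crossoverIntegral μ β₀ α₀ α₁ = 0)
    (hIm : crossoverIntegral μ β₀ α₀ αm ≠ 0)
    (hIp : crossoverIntegral μ β₀ α₀ αp ≠ 0) :
    ascendingBranch μ β₀ α₀ α₁ = descendingBranch μ β₀ α₀ α₁ ∧
    ascendingBranch μ β₀ α₀ αm ≠ descendingBranch μ β₀ α₀ αm ∧
    ascendingBranch μ β₀ α₀ αp ≠ descendingBranch μ β₀ α₀ αp ∧
    ContinuousOn (crossoverIntegral μ β₀ α₀) (Set.Icc β₀ α₀) ∧
    connectedComponentIn
        {v : ℝ | v ∈ Set.Icc β₀ α₀ ∧ crossoverIntegral μ β₀ α₀ v = 0} α₁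
      ⊆ Set.Ioo αm αp := by
  have key := branch_diff μ β₀ α₀ hμ
  refine ⟨?_, ?_, ?_, crossover_continuousOn μ β₀ α₀ hμ, ?_⟩
  · have := key α₁; rw [hI0] at this; linarith
  · intro h; apply hIm; have := key αm; rw [← h] at this; linarith
  · intro h; apply hIp; have := key αp; rw [← h] at this; linarith
  · set Z := {v : ℝ | v ∈ Set.Icc β₀ α₀ ∧ crossoverIntegral μ β₀ α₀ v = 0} with hZ
    have hα₁Z : α₁ ∈ Z := ⟨⟨by linarith, by linarith⟩, hI0⟩
    have hconn : IsConnected (connectedComponentIn Z α₁) :=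
      isConnected_connectedComponentIn_iff.mpr hα₁Z
    have hord : (connectedComponentIn Z α₁).OrdConnected :=
      hconn.isPreconnected.ordConnected
    have hsub : connectedComponentIn Z α₁ ⊆ Z := connectedComponentIn_subset Z α₁
    have hmem : α₁ ∈ connectedComponentIn Z α₁ := mem_connectedComponentIn hα₁Z
    intro x hx
    constructor
    · by_contra h
      push_neg at h
      have : αm ∈ connectedComponentIn Z α₁ :=
        hord.out hx hmem ⟨h, le_of_lt h2⟩
      exact hIm (hsub this).2
    · by_contra h
      push_neg at h
      have : αp ∈ connectedComponentIn Z α₁ :=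
        hord.out hmem hx ⟨le_of_lt h3, h⟩
      exact hIp (hsub this).2
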